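/- Let v : (0,∞) → ℝ be continuous and suppose for every x₀ > 0 and every C² function φ with v - φ having a local maximum at x₀ and v(x₀) = φ(x₀), either φ'(x₀) ≤ 1 or ρv(x₀) - μφ'(x₀) - (σ²/2)φ''(x₀) ≤ 0 holds. If v admits left and right derivatives with v'⁻(x₀) > v'⁺(x₀) at some x₀ and v'⁺(x₀) > 1, then testing with φ(x) = v(x₀) + q(x - x₀) - (1/(2ε))(x - x₀)² for q ∈ (v'⁺(x₀), v'⁻(x₀)) and ε small yields a contradiction; hence v is differentiable at every point where the subsolution condition forces φ' > 1. -/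

import Mathlib

/-- For a continuous viscosity subsolution of min{ρv - μv' - (σ²/2)v'', v' - 1} ≤ 0,
at any point where the right derivative exceeds 1 the left derivative cannot
exceed the right derivative. -/
theorem stmt_17 (ρ μ σ : ℝ) (hρ : 0 < ρ) (hσ : 0 < σ)
    (v vL vR : ℝ → ℝ)
    (hcont : ContinuousOn v (Set.Ioi 0))
    (hL : ∀ x ∈ Set.Ioi (0:ℝ), HasDerivWithinAt v (vL x) (Set.Iio x) x)
    (hR : ∀ x ∈ Set.Ioi (0:ℝ), HasDerivWithinAt v (vR x) (Set.Ioi x) x)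
    (hsub : ∀ x₀ ∈ Set.Ioi (0:ℝ), ∀ φ : ℝ → ℝ, ContDiff ℝ 2 φ →
      v x₀ = φ x₀ → IsLocalMax (fun x => v x - φ x) x₀ →
      deriv φ x₀ ≤ 1 ∨ ρ * v x₀ - μ * deriv φ x₀ - σ^2 / 2 * deriv (deriv φ) x₀ ≤ 0) :
    ∀ x₀ ∈ Set.Ioi (0:ℝ), 1 < vR x₀ → vL x₀ ≤ vR x₀ := by
  intro x₀ hx₀ hR1
  by_contra hlt
  push_neg at hlt
  -- choose q strictly between the one-sided derivatives
  set q : ℝ := (vR x₀ + vL x₀) / 2 with hqdef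
  have hq1 : vR x₀ < q := by simp only [hqdef]; linarith
  have hq2 : q < vL x₀ := by simp only [hqdef]; linarith
  have hq3 : 1 < q := lt_trans hR1 hq1
  -- margin η
  set η : ℝ := min ((q - vR x₀) / 2) ((vL x₀ - q) / 2) with hηdef
  have hη : 0 < η := by
    apply lt_min <;> linarith
  have hηR : vR x₀ < q - η := by
    have := min_le_left ((q - vR x₀) / 2) ((vL x₀ - q) / 2)
    rw [← hηdef] at this; linarith
  have hηL : q + η < vL x₀ := by
    have := min_le_right ((q - vR x₀) / 2) ((vL x₀ - q) / 2)
    rw [← hηdef] at this; linarith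
  -- choose ε small enough
  set A : ℝ := |μ * q - ρ * v x₀| + 1 with hAdef
  have hA : 0 < A := by positivity
  set ε : ℝ := σ ^ 2 / (2 * A) with hεdef
  have hε : 0 < ε := by positivity
  -- the test function
  set φ : ℝ → ℝ := fun x => v x₀ + q * (x - x₀) - (x - x₀) ^ 2 * (2 * ε)⁻¹ with hφdef
  have hφsmooth : ContDiff ℝ 2 φ := by
    apply ContDiff.sub
    · exact contDiff_const.add (contDiff_const.mul ((contDiff_id).sub contDiff_const))
    · exact (((contDiff_id).sub contDiff_const).pow 2).mul contDiff_const
  -- first derivative of φ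
  have hφ' : ∀ x : ℝ, HasDerivAt φ (q - (x - x₀) / ε) x := by
    intro x
    have h1 : HasDerivAt (fun x : ℝ => v x₀ + q * (x - x₀) - (x - x₀) ^ 2 * (2 * ε)⁻¹)
        (q * 1 - (↑2 * (x - x₀) ^ (2 - 1) * 1) * (2 * ε)⁻¹) x := by
      exact ((((hasDerivAt_id x).sub_const x₀).const_mul q).const_add (v x₀)).sub
        ((((hasDerivAt_id x).sub_const x₀).pow 2).mul_const (2 * ε)⁻¹)
    convert h1 using 1
    have hε' : ε ≠ 0 := ne_of_gt hε
    field_simp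
    ring
  have hderivφ : deriv φ = fun x => q - (x - x₀) / ε := funext fun x => (hφ' x).deriv
  have hderivφx₀ : deriv φ x₀ = q := by rw [hderivφ]; simp
  have hφ'' : deriv (deriv φ) x₀ = -(1 / ε) := by
    rw [hderivφ]
    have h2 : HasDerivAt (fun x : ℝ => q - (x - x₀) / ε) (-(1 / ε)) x₀ := by
      have := (((hasDerivAt_id x₀).sub_const x₀).div_const ε).const_sub q
      simpa using this
    exact h2.deriv
  -- local max of v - φ at x₀
  have hvφ : v x₀ = φ x₀ := by simp [hφdef]
  have hslopeR : Filter.Tendsto (slope v x₀) (nhdsWithin x₀ (Set.Ioi x₀)) (nhds (vR x₀)) := by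
    have := (hasDerivWithinAt_iff_tendsto_slope).mp (hR x₀ hx₀)
    have hset : Set.Ioi x₀ \ {x₀} = Set.Ioi x₀ := by
      apply Set.diff_singleton_eq_self; simp
    rwa [hset] at this
  have hslopeL : Filter.Tendsto (slope v x₀) (nhdsWithin x₀ (Set.Iio x₀)) (nhds (vL x₀)) := by
    have := (hasDerivWithinAt_iff_tendsto_slope).mp (hL x₀ hx₀)
    have hset : Set.Iio x₀ \ {x₀} = Set.Iio x₀ := by
      apply Set.diff_singleton_eq_self; simp
    rwa [hset] at this
  have hevR : ∀ᶠ x in nhdsWithin x₀ (Set.Ioi x₀), slope v x₀ x < q - η :=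
    hslopeR.eventually_lt_const hηR
  have hevL : ∀ᶠ x in nhdsWithin x₀ (Set.Iio x₀), q + η < slope v x₀ x :=
    hslopeL.eventually_const_lt hηL
  have habs : ∀ᶠ x in nhds x₀, |x - x₀| < 2 * ε * η :=
    eventually_abs_sub_lt x₀ (by positivity)
  have hmaxR : ∀ᶠ x in nhdsWithin x₀ (Set.Ioi x₀), v x - φ x ≤ 0 := by
    filter_upwards [hevR, habs.filter_mono nhdsWithin_le_nhds, self_mem_nhdsWithin]
      with x hs ha hx
    have hd : 0 < x - x₀ := sub_pos.mpr hx
    rw [slope_def_field] at hs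
    have h1 : v x - v x₀ < (q - η) * (x - x₀) := (div_lt_iff₀ hd).mp hs
    have h2 : (x - x₀) ^ 2 * (2 * ε)⁻¹ ≤ η * (x - x₀) := by
      rw [← div_eq_mul_inv, div_le_iff₀ (by positivity)]
      have : x - x₀ < 2 * ε * η := lt_of_le_of_lt (le_abs_self _) ha
      nlinarith
    have h3 : (q + η) * (x - x₀) - q * (x - x₀) = η * (x - x₀) := by ring
    simp only [hφdef]
    linarith
  have hmaxL : ∀ᶠ x in nhdsWithin x₀ (Set.Iio x₀), v x - φ x ≤ 0 := by
    filter_upwards [hevL, habs.filter_mono nhdsWithin_le_nhds, self_mem_nhdsWithin]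
      with x hs ha hx
    have hd : x - x₀ < 0 := sub_neg.mpr hx
    rw [slope_def_field] at hs
    have h1 : v x - v x₀ < (q + η) * (x - x₀) := by
      have := (lt_div_iff_of_neg hd).mp hs
      linarith
    have h2 : (x - x₀) ^ 2 * (2 * ε)⁻¹ ≤ -(η * (x - x₀)) := by
      rw [← div_eq_mul_inv, div_le_iff₀ (by positivity)]
      have : -(x - x₀) < 2 * ε * η := lt_of_le_of_lt (neg_le_abs _) ha
      nlinarith
    have h3 : (q + η) * (x - x₀) - q * (x - x₀) = η * (x - x₀) := by ring
    simp only [hφdef]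
    linarith
  have hmax : IsLocalMax (fun x => v x - φ x) x₀ := by
    have h0 : v x₀ - φ x₀ = 0 := by rw [hvφ]; ring
    rw [IsLocalMax, IsMaxFilter]
    have hne : ∀ᶠ x in nhdsWithin x₀ ({x₀}ᶜ), v x - φ x ≤ 0 := by
      rw [← nhdsLT_sup_nhdsGT, Filter.eventually_sup]
      exact ⟨hmaxL, hmaxR⟩
    rw [← nhdsNE_sup_pure, Filter.eventually_sup]
    constructor
    · filter_upwards [hne] with x hx
      simp only [h0]; exact hx
    · exact Filter.eventually_pure.mpr le_rfl
  -- apply the subsolution property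
  rcases hsub x₀ hx₀ φ hφsmooth hvφ hmax with h | h
  · rw [hderivφx₀] at h; linarith
  · rw [hderivφx₀, hφ''] at h
    have key : σ ^ 2 / 2 * (1 / ε) = A := by
      rw [hεdef]
      have hσ' : σ ≠ 0 := ne_of_gt hσ
      have hA' : A ≠ 0 := ne_of_gt hA
      field_simp
    rw [mul_neg, sub_neg_eq_add, key] at h
    have hM : μ * q - ρ * v x₀ ≤ |μ * q - ρ * v x₀| := le_abs_self _
    rw [hAdef] at h
    linarith
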